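/- arXiv:1401.6473 — 2 statements merged into one kernel-verified Lean document; each statement's English description precedes it below -/
import Mathlib

section
/- Let N ≥ 2 and β > 1 an algebraic number, and let t_1⋯t_p be an admissible block with generalized Thue–Morse sequence (θ_ℓ). Then the identity ∑_{i=1}^∞ τ_i β^{-pi} = (1 − β^{-p} − ∑_{q=1}^p t_q β^{-q}) / ((1 − β^{-p})(1 − β^{-p} + ∑_{q=1}^p (N−1−2t_q) β^{-q})) holds whenever ∑_{ℓ=1}^∞ θ_ℓ β^{-ℓ} = 1, where (τ_i) is the classical Thue–Morse sequence. -/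
/-- Reflection of a block: each digit `c` becomes `N - 1 - c`. -/
def reflB (N : ℕ) (w : List ℕ) : List ℕ := w.map (fun c => N - 1 - c)

/-- The block `w` with its last digit incremented by one. -/
def plusB (w : List ℕ) : List ℕ := w.dropLast ++ [w.getLast! + 1]

/-- The `i`-th cyclic rotation of the block `w` (0-indexed). -/
def rotB (w : List ℕ) (i : ℕ) : List ℕ := w.drop i ++ w.take i

/-- The lexicographic inequalities defining admissibility of a block. -/
def AdmissibleIneq (N : ℕ) (w : List ℕ) : Prop :=
  ∀ i < w.length,
    reflB N w ≤ rotB w i ∧ plusB (w.drop i) ++ reflB N (w.take i) ≤ plusB w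

/-- An admissible block in `{0, …, N-1}`. -/
def Admissible (N : ℕ) (w : List ℕ) : Prop :=
  w ≠ [] ∧ (∀ c ∈ w, c < N) ∧ w.getLast! < N - 1 ∧ AdmissibleIneq N w

/-- Prefixes of the generalized Thue–Morse sequence generated by `plusB w`:
`gtmBlock N w n` is the prefix `θ_1 ⋯ θ_{2^n p}`. -/
def gtmBlock (N : ℕ) (w : List ℕ) : ℕ → List ℕ
  | 0 => plusB w
  | n + 1 => gtmBlock N w n ++ plusB (reflB N (gtmBlock N w n))

/-- The generalized Thue–Morse sequence generated by `plusB w`, 0-indexed: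
`gtm N w n = θ_{n+1}`. -/
def gtm (N : ℕ) (w : List ℕ) : ℕ → ℕ := fun n => (gtmBlock N w n).getD n 0

/-- Strict lexicographic order on infinite sequences of digits. -/
def seqLt (a b : ℕ → ℕ) : Prop := ∃ n, (∀ k < n, a k = b k) ∧ a n < b n

/-- Lexicographic order on infinite sequences of digits. -/
def seqLe (a b : ℕ → ℕ) : Prop := seqLt a b ∨ a = b

/-- Shift of a sequence by `k` places. -/
def shift (a : ℕ → ℕ) (k : ℕ) : ℕ → ℕ := fun n => a (n + k)

/-- The periodic sequence `w^∞` obtained by repeating the block `w`. -/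
def per (w : List ℕ) : ℕ → ℕ := fun n => w.getD (n % w.length) 0

/-- Reflection of an infinite sequence. -/
def reflSeq (N : ℕ) (a : ℕ → ℕ) : ℕ → ℕ := fun n => N - 1 - a n

/-- The classical Thue–Morse sequence: parity of the binary digit sum. -/
def tm (i : ℕ) : ℕ := (Nat.digits 2 i).sum % 2

/-- Number of length-`n` words appearing in sequences of `Z`. -/
noncomputable def wordCount (Z : Set (ℕ → ℕ)) (n : ℕ) : ℕ :=
  Set.ncard { u : List ℕ | u.length = n ∧ ∃ d ∈ Z, ∀ k < n, u.getD k 0 = d k }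

/-- `Z` has topological entropy `h`. -/
def hasEntropy (Z : Set (ℕ → ℕ)) (h : ℝ) : Prop :=
  Filter.Tendsto (fun n : ℕ => Real.log (wordCount Z n) / n) Filter.atTop (nhds h)

namespace S18


lemma tm_le_one (i : ℕ) : tm i ≤ 1 := Nat.lt_succ_iff.mp (Nat.mod_lt _ (by norm_num))

lemma tm_zero : tm 0 = 0 := by simp [tm]
lemma tm_one : tm 1 = 1 := by simp [tm]

lemma tm_two_mul (i : ℕ) : tm (2 * i) = tm i := by
  rcases Nat.eq_zero_or_pos i with h | h
  · simp [h]
  · unfold tm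
    rw [Nat.digits_def' (by norm_num : (1:ℕ) < 2) (by omega)]
    simp [Nat.mul_div_cancel_left _ (by norm_num : 0 < 2)]

lemma tm_two_mul_add_one (i : ℕ) : tm (2 * i + 1) = 1 - tm i := by
  unfold tm
  rw [Nat.digits_def' (by norm_num : (1:ℕ) < 2) (by omega)]
  have h2 : (2 * i + 1) % 2 = 1 := by omega
  have h3 : (2 * i + 1) / 2 = i := by omega
  rw [h2, h3]
  simp only [List.sum_cons]
  omega

lemma tm_pow_add : ∀ n : ℕ, ∀ i < 2 ^ n, tm (2 ^ n + i) = 1 - tm i := by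
  intro n
  induction n with
  | zero => intro i hi; interval_cases i; simp [tm_zero, tm_one]
  | succ n ih =>
    intro i hi
    obtain ⟨j, rfl | rfl⟩ := Nat.even_or_odd' i
    · have hj : j < 2 ^ n := by rw [pow_succ] at hi; omega
      have : 2 ^ (n + 1) + 2 * j = 2 * (2 ^ n + j) := by ring
      rw [this, tm_two_mul, ih j hj, tm_two_mul]
    · have hj : j < 2 ^ n := by rw [pow_succ] at hi; omega
      have : 2 ^ (n + 1) + (2 * j + 1) = 2 * (2 ^ n + j) + 1 := by ring
      rw [this, tm_two_mul_add_one, ih j hj, tm_two_mul_add_one]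

lemma tm_pow (n : ℕ) : tm (2 ^ n) = 1 := by
  simpa [tm_zero] using tm_pow_add n 0 (Nat.pow_pos (by norm_num))



lemma getLast!_concat (L : List ℕ) (a : ℕ) : (L ++ [a]).getLast! = a :=
  List.getLast!_of_getLast? List.getLast?_concat

lemma getLast!_eq_getD (w : List ℕ) (hw : w ≠ []) :
    w.getLast! = w.getD (w.length - 1) 0 := by
  have h1 : w.getLast! = w.getLast hw :=
    List.getLast!_of_getLast? (List.getLast_eq_iff_getLast?_eq_some hw |>.mp rfl)
  rw [h1, List.getLast_eq_getElem,
    List.getD_eq_getElem _ _ (by simp [List.length_pos_iff.mpr hw])]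

lemma self_eq_dropLast_append (w : List ℕ) (hw : w ≠ []) :
    w = w.dropLast ++ [w.getLast!] := by
  conv_lhs => rw [← List.dropLast_append_getLast hw]
  rw [List.getLast!_of_getLast? (List.getLast_eq_iff_getLast?_eq_some hw |>.mp rfl)]

lemma plusB_concat (L : List ℕ) (a : ℕ) : plusB (L ++ [a]) = L ++ [a + 1] := by
  rw [plusB, List.dropLast_concat, getLast!_concat]

lemma length_plusB (w : List ℕ) (hw : w ≠ []) : (plusB w).length = w.length := by
  conv_rhs => rw [self_eq_dropLast_append w hw]
  rw [plusB]; simp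

lemma length_reflB (N : ℕ) (w : List ℕ) : (reflB N w).length = w.length := by
  simp [reflB]

lemma getD_reflB (N : ℕ) (w : List ℕ) (r : ℕ) (hr : r < w.length) :
    (reflB N w).getD r 0 = N - 1 - w.getD r 0 := by
  rw [List.getD_eq_getElem _ _ (by simpa [reflB] using hr),
      List.getD_eq_getElem _ _ hr]
  simp [reflB]

lemma getD_plusB (w : List ℕ) (hw : w ≠ []) (r : ℕ) (hr : r < w.length) :
    (plusB w).getD r 0 =
      if r = w.length - 1 then w.getD r 0 + 1 else w.getD r 0 := by
  have hd : w.dropLast.length = w.length - 1 := List.length_dropLast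
  rw [plusB]
  by_cases h : r = w.length - 1
  · subst h
    rw [List.getD_append_right _ _ _ _ (by omega), hd]
    simp only [Nat.sub_self, List.getD_cons_zero, if_true]
    rw [← getLast!_eq_getD w hw]
  · rw [if_neg h, List.getD_append _ _ _ _ (by omega),
        List.getD_eq_getElem _ _ (by omega), List.getD_eq_getElem _ _ hr,
        List.getElem_dropLast]

lemma reflB_reflB (N : ℕ) (w : List ℕ) (h : ∀ c ∈ w, c ≤ N - 1) :
    reflB N (reflB N w) = w := by
  rw [reflB, reflB, List.map_map]
  conv_rhs => rw [← List.map_id w]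
  refine List.map_congr_left fun a ha => ?_
  have := h a ha
  simp only [Function.comp_apply, id_eq]
  omega

lemma plusB_append (L M : List ℕ) (hM : M ≠ []) :
    plusB (L ++ M) = L ++ plusB M := by
  obtain ⟨M', a, rfl⟩ := List.eq_nil_or_concat M |>.resolve_left hM
  rw [List.concat_eq_append, ← List.append_assoc, plusB_concat, plusB_concat,
    List.append_assoc]

lemma reflB_append (N : ℕ) (L M : List ℕ) :
    reflB N (L ++ M) = reflB N L ++ reflB N M := by simp [reflB]

lemma plusB_reflB_plusB (N : ℕ) (w : List ℕ) (hw : w ≠ [])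
    (hlast : w.getLast! < N - 1) :
    plusB (reflB N (plusB w)) = reflB N w := by
  have h1 : plusB w = w.dropLast ++ [w.getLast! + 1] := rfl
  rw [h1, reflB_append]
  have h2 : reflB N [w.getLast! + 1] = [N - 1 - (w.getLast! + 1)] := rfl
  rw [h2, plusB_concat]
  conv_rhs => rw [self_eq_dropLast_append w hw]
  rw [reflB_append]
  have h3 : reflB N [w.getLast!] = [N - 1 - w.getLast!] := rfl
  rw [h3]
  have h4 : N - 1 - (w.getLast! + 1) + 1 = N - 1 - w.getLast! := by omega
  rw [h4]


def Bb (N : ℕ) (w : List ℕ) (i : ℕ) : List ℕ :=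
  if tm i = 0 then (if tm (i + 1) = 0 then w else plusB w)
  else (if tm (i + 1) = 0 then reflB N (plusB w) else reflB N w)

def joinB (N : ℕ) (w : List ℕ) (m : ℕ) : List ℕ := (List.range m).flatMap (Bb N w)

lemma mem_plusB_le (N : ℕ) (w : List ℕ) (hmem : ∀ c ∈ w, c < N)
    (hlast : w.getLast! < N - 1) : ∀ c ∈ plusB w, c ≤ N - 1 := by
  intro c hc
  rw [plusB] at hc
  rcases List.mem_append.mp hc with h | h
  · exact Nat.le_sub_one_of_lt (hmem c (List.dropLast_subset w h))
  · rw [List.mem_singleton.mp h]; omega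

lemma length_Bb (N : ℕ) (w : List ℕ) (hw : w ≠ []) (i : ℕ) :
    (Bb N w i).length = w.length := by
  rw [Bb]
  split <;> split <;> simp [length_reflB, length_plusB w hw]

lemma Bb_ne_nil (N : ℕ) (w : List ℕ) (hw : w ≠ []) (i : ℕ) : Bb N w i ≠ [] :=
  List.ne_nil_of_length_pos (by rw [length_Bb N w hw]; exact List.length_pos_iff.mpr hw)

lemma reflB_Bb (N : ℕ) (w : List ℕ) (hmem : ∀ c ∈ w, c < N)
    (hlast : w.getLast! < N - 1) (i j : ℕ)
    (h1 : tm j = 1 - tm i) (h2 : tm (j + 1) = 1 - tm (i + 1)) :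
    Bb N w j = reflB N (Bb N w i) := by
  have hww : ∀ c ∈ w, c ≤ N - 1 := fun c hc => Nat.le_sub_one_of_lt (hmem c hc)
  have hpw := mem_plusB_le N w hmem hlast
  rcases Nat.le_one_iff_eq_zero_or_eq_one.mp (tm_le_one i) with h | h <;>
    rcases Nat.le_one_iff_eq_zero_or_eq_one.mp (tm_le_one (i + 1)) with h' | h' <;>
    simp only [h, h'] at h1 h2 <;> norm_num at h1 h2 <;> simp [Bb, h, h', h1, h2]
  · exact (reflB_reflB N (plusB w) hpw).symm
  · exact (reflB_reflB N w hww).symm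

lemma Bb_last (N : ℕ) (w : List ℕ) (hw : w ≠ []) (hmem : ∀ c ∈ w, c < N)
    (hlast : w.getLast! < N - 1) (i j : ℕ)
    (h1 : tm j = 1 - tm i) (h2 : tm (i + 1) = 1) (h3 : tm (j + 1) = 1) :
    Bb N w j = plusB (reflB N (Bb N w i)) := by
  have hww : ∀ c ∈ w, c ≤ N - 1 := fun c hc => Nat.le_sub_one_of_lt (hmem c hc)
  rcases Nat.le_one_iff_eq_zero_or_eq_one.mp (tm_le_one i) with h | h <;>
    rw [h] at h1 <;> norm_num at h1 <;> simp [Bb, h, h1, h2, h3]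
  · exact (plusB_reflB_plusB N w hw hlast).symm
  · rw [reflB_reflB N w hww]

lemma joinB_succ (N : ℕ) (w : List ℕ) (m : ℕ) :
    joinB N w (m + 1) = joinB N w m ++ Bb N w m := by
  rw [joinB, joinB, List.range_succ, List.flatMap_append, List.flatMap_cons,
    List.flatMap_nil, List.append_nil]

lemma length_joinB (N : ℕ) (w : List ℕ) (hw : w ≠ []) (m : ℕ) :
    (joinB N w m).length = m * w.length := by
  induction m with
  | zero => simp [joinB]
  | succ m ih =>
    rw [joinB_succ, List.length_append, ih, length_Bb N w hw]
    ring

lemma getD_joinB (N : ℕ) (w : List ℕ) (hw : w ≠ []) (m i r : ℕ)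
    (him : i < m) (hr : r < w.length) :
    (joinB N w m).getD (i * w.length + r) 0 = (Bb N w i).getD r 0 := by
  induction m with
  | zero => omega
  | succ m ih =>
    rw [joinB_succ]
    rcases Nat.lt_or_ge i m with h | h
    · rw [List.getD_append _ _ _ _ ?_, ih h]
      rw [length_joinB N w hw]
      calc i * w.length + r < i * w.length + w.length := by omega
        _ = (i + 1) * w.length := by ring
        _ ≤ m * w.length := Nat.mul_le_mul_right _ (by omega)
    · have hi : i = m := by omega
      subst hi
      rw [List.getD_append_right _ _ _ _ (by rw [length_joinB N w hw]; omega),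
        length_joinB N w hw]
      congr 1
      omega

lemma gtmBlock_eq (N : ℕ) (w : List ℕ) (hw : w ≠ []) (hmem : ∀ c ∈ w, c < N)
    (hlast : w.getLast! < N - 1) (n : ℕ) :
    gtmBlock N w n = joinB N w (2 ^ n) := by
  induction n with
  | zero =>
    show plusB w = _
    have hr1 : List.range (2 ^ 0) = [0] := rfl
    rw [joinB, hr1, List.flatMap_cons, List.flatMap_nil, List.append_nil]
    simp [Bb, tm_zero, tm_one]
  | succ n ih =>
    have h2 : (0:ℕ) < 2 ^ n := Nat.pow_pos (by norm_num)
    have key : plusB (reflB N (joinB N w (2 ^ n))) =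
        (List.range (2 ^ n)).flatMap (fun j => Bb N w (2 ^ n + j)) := by
      have hrefl : reflB N (joinB N w (2 ^ n)) =
          (List.range (2 ^ n)).flatMap (fun j => reflB N (Bb N w j)) := by
        rw [joinB, reflB, List.map_flatMap]; rfl
      have hr : List.range (2 ^ n) = List.range (2 ^ n - 1) ++ [2 ^ n - 1] := by
        conv_lhs => rw [show 2 ^ n = (2 ^ n - 1) + 1 by omega]
        rw [List.range_succ]
      rw [hrefl, hr, List.flatMap_append, List.flatMap_cons, List.flatMap_nil,
        List.append_nil, List.flatMap_append, List.flatMap_cons, List.flatMap_nil,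
        List.append_nil]
      rw [plusB_append _ _ (by
        intro hnil
        have := congrArg List.length hnil
        rw [length_reflB, length_Bb N w hw] at this
        simp at this
        exact hw this)]
      congr 1
      · refine List.flatMap_congr fun j hj => ?_
        rw [List.mem_range] at hj
        exact (reflB_Bb N w hmem hlast j (2 ^ n + j)
          (tm_pow_add n j (by omega))
          (by rw [Nat.add_assoc]; exact tm_pow_add n (j + 1) (by omega))).symm
      · refine (Bb_last N w hw hmem hlast (2 ^ n - 1) (2 ^ n + (2 ^ n - 1))
          (tm_pow_add n (2 ^ n - 1) (by omega)) ?_ ?_).symm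
        · rw [show 2 ^ n - 1 + 1 = 2 ^ n by omega]; exact tm_pow n
        · rw [show 2 ^ n + (2 ^ n - 1) + 1 = 2 ^ (n + 1) by rw [pow_succ]; omega]
          exact tm_pow (n + 1)
    show gtmBlock N w n ++ plusB (reflB N (gtmBlock N w n)) = _
    have hpow : (2:ℕ) ^ (n + 1) = 2 ^ n + 2 ^ n := by rw [pow_succ]; omega
    rw [ih, key, hpow]
    conv_rhs => rw [joinB, List.range_add, List.flatMap_append, List.flatMap_map]
    rfl

lemma gtm_eq (N : ℕ) (w : List ℕ) (hw : w ≠ []) (hmem : ∀ c ∈ w, c < N)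
    (hlast : w.getLast! < N - 1) (i r : ℕ) (hr : r < w.length) :
    gtm N w (i * w.length + r) = (Bb N w i).getD r 0 := by
  have hp : 0 < w.length := List.length_pos_iff.mpr hw
  have hiℓ : i ≤ i * w.length + r :=
    le_trans (Nat.le_mul_of_pos_right i hp) (Nat.le_add_right _ _)
  have h2 : i < 2 ^ (i * w.length + r) :=
    lt_of_le_of_lt hiℓ Nat.lt_two_pow_self
  show (gtmBlock N w (i * w.length + r)).getD (i * w.length + r) 0 = _
  rw [gtmBlock_eq N w hw hmem hlast, getD_joinB N w hw _ i r h2 hr]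

lemma getD_le_of_forall (L : List ℕ) (B : ℕ) (h : ∀ c ∈ L, c ≤ B) (r : ℕ) :
    L.getD r 0 ≤ B := by
  rcases Nat.lt_or_ge r L.length with hr | hr
  · rw [List.getD_eq_getElem _ _ hr]; exact h _ (List.getElem_mem hr)
  · rw [List.getD_eq_default _ _ hr]; exact Nat.zero_le B

lemma Bb_getD_le (N : ℕ) (w : List ℕ) (hmem : ∀ c ∈ w, c < N)
    (hlast : w.getLast! < N - 1) (i r : ℕ) : (Bb N w i).getD r 0 ≤ N - 1 := by
  apply getD_le_of_forall
  intro c hc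
  rw [Bb] at hc
  split at hc <;> split at hc
  · exact Nat.le_sub_one_of_lt (hmem c hc)
  · exact mem_plusB_le N w hmem hlast c hc
  · simp only [reflB, List.mem_map] at hc; obtain ⟨a, -, rfl⟩ := hc; omega
  · simp only [reflB, List.mem_map] at hc; obtain ⟨a, -, rfl⟩ := hc; omega

lemma gtm_le (N : ℕ) (w : List ℕ) (hw : w ≠ []) (hmem : ∀ c ∈ w, c < N)
    (hlast : w.getLast! < N - 1) (ℓ : ℕ) : gtm N w ℓ ≤ N - 1 := by
  have hp : 0 < w.length := List.length_pos_iff.mpr hw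
  have h := Nat.div_add_mod' ℓ w.length
  calc gtm N w ℓ = gtm N w (ℓ / w.length * w.length + ℓ % w.length) := by rw [h]
    _ = (Bb N w (ℓ / w.length)).getD (ℓ % w.length) 0 :=
        gtm_eq N w hw hmem hlast _ _ (Nat.mod_lt _ hp)
    _ ≤ N - 1 := Bb_getD_le N w hmem hlast _ _

lemma gtm_cast (N : ℕ) (w : List ℕ) (hN : 2 ≤ N) (hw : w ≠ [])
    (hmem : ∀ c ∈ w, c < N) (hlast : w.getLast! < N - 1) (i r : ℕ)
    (hr : r < w.length) :
    ((gtm N w (i * w.length + r) : ℕ) : ℝ) =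
      (w.getD r 0 : ℝ) + (tm i : ℝ) * ((N : ℝ) - 1 - 2 * (w.getD r 0 : ℝ)) +
        (if r = w.length - 1 then ((tm (i + 1) : ℝ) - (tm i : ℝ)) else 0) := by
  have htrN : w.getD r 0 ≤ N - 1 := by
    rw [List.getD_eq_getElem _ _ hr]
    exact Nat.le_sub_one_of_lt (hmem _ (List.getElem_mem hr))
  have hlastD : w.getD (w.length - 1) 0 < N - 1 := by
    rw [← getLast!_eq_getD w hw]; exact hlast
  have h1N : (1:ℕ) ≤ N := by omega
  rw [gtm_eq N w hw hmem hlast i r hr, Bb]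
  rcases Nat.le_one_iff_eq_zero_or_eq_one.mp (tm_le_one i) with h | h <;>
    rcases Nat.le_one_iff_eq_zero_or_eq_one.mp (tm_le_one (i + 1)) with h' | h'
  · simp [h, h']
  · rw [h, h']
    simp only [reduceIte, Nat.cast_zero, Nat.cast_one, zero_mul, add_zero, one_mul,
      sub_zero, zero_sub, sub_self, ite_self, if_neg (one_ne_zero : (1:ℕ) ≠ 0)]
    rw [getD_plusB w hw r hr]
    by_cases hrp : r = w.length - 1
    · simp only [hrp, if_true, if_pos rfl]
      push_cast
      ring
    · simp [hrp]
  · rw [h, h']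
    simp only [reduceIte, Nat.cast_zero, Nat.cast_one, zero_mul, add_zero, one_mul,
      sub_zero, zero_sub, sub_self, ite_self, if_neg (one_ne_zero : (1:ℕ) ≠ 0)]
    rw [getD_reflB N (plusB w) r (by rw [length_plusB w hw]; exact hr),
      getD_plusB w hw r hr]
    by_cases hrp : r = w.length - 1
    · subst hrp
      rw [if_pos rfl, if_pos rfl]
      have ht1 : w.getD (w.length - 1) 0 + 1 ≤ N - 1 := by omega
      rw [Nat.cast_sub ht1, Nat.cast_sub h1N]
      push_cast
      ring
    · rw [if_neg hrp, if_neg hrp]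
      rw [Nat.cast_sub htrN, Nat.cast_sub h1N]
      push_cast
      ring
  · rw [h, h']
    simp only [reduceIte, Nat.cast_zero, Nat.cast_one, zero_mul, add_zero, one_mul,
      sub_zero, zero_sub, sub_self, ite_self, if_neg (one_ne_zero : (1:ℕ) ≠ 0)]
    rw [getD_reflB N w r hr]
    rw [Nat.cast_sub htrN, Nat.cast_sub h1N]
    push_cast
    ring


lemma hinner_lemma (N : ℕ) (hN : 2 ≤ N) (β : ℝ) (hβ : 1 < β) (w : List ℕ)
    (hw : w ≠ []) (hmem : ∀ c ∈ w, c < N) (hlast : w.getLast! < N - 1) (i : ℕ) :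
    ∑ r ∈ Finset.range w.length,
        (gtm N w (i * w.length + r) : ℝ) / β ^ ((i * w.length + r) + 1) =
      ((β ^ w.length)⁻¹) ^ i *
          ((∑ q ∈ Finset.range w.length, (w.getD q 0 : ℝ) / β ^ (q + 1)) +
            (tm i : ℝ) * ∑ q ∈ Finset.range w.length,
              ((N : ℝ) - 1 - 2 * (w.getD q 0 : ℝ)) / β ^ (q + 1)) +
        ((tm (i + 1) : ℝ) - (tm i : ℝ)) * ((β ^ w.length)⁻¹) ^ (i + 1) := by
  have hβ0 : (0:ℝ) < β := lt_trans one_pos hβ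
  have hβne : β ≠ 0 := ne_of_gt hβ0
  have hp : 0 < w.length := List.length_pos_iff.mpr hw
  have hxi : ((β ^ w.length)⁻¹) ^ i = (β ^ (i * w.length))⁻¹ := by
    rw [inv_pow, ← pow_mul, Nat.mul_comm]
  have hterm : ∀ r ∈ Finset.range w.length,
      (gtm N w (i * w.length + r) : ℝ) / β ^ ((i * w.length + r) + 1) =
        ((β ^ w.length)⁻¹) ^ i * ((w.getD r 0 : ℝ) / β ^ (r + 1)) +
          ((β ^ w.length)⁻¹) ^ i *
            ((tm i : ℝ) * (((N : ℝ) - 1 - 2 * (w.getD r 0 : ℝ)) / β ^ (r + 1))) +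
          (if r = w.length - 1 then
            ((tm (i + 1) : ℝ) - (tm i : ℝ)) * (((β ^ w.length)⁻¹) ^ i * (β ^ (r + 1))⁻¹)
          else 0) := by
    intro r hr
    rw [Finset.mem_range] at hr
    rw [gtm_cast N w hN hw hmem hlast i r hr]
    have hpow : β ^ (i * w.length + r + 1) = β ^ (i * w.length) * β ^ (r + 1) := by
      rw [← pow_add, Nat.add_assoc]
    rw [hpow, hxi]
    have hy : β ^ (i * w.length) ≠ 0 := pow_ne_zero _ hβne
    have hz : β ^ (r + 1) ≠ 0 := pow_ne_zero _ hβne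
    split_ifs with h <;> field_simp <;> ring
  rw [Finset.sum_congr rfl hterm, Finset.sum_add_distrib, Finset.sum_add_distrib,
    ← Finset.mul_sum, ← Finset.mul_sum, Finset.sum_ite_eq' (Finset.range w.length)
      (w.length - 1)
      (fun r => ((tm (i + 1) : ℝ) - (tm i : ℝ)) *
        (((β ^ w.length)⁻¹) ^ i * (β ^ (r + 1))⁻¹)),
    if_pos (Finset.mem_range.mpr (by omega)), ← Finset.mul_sum]
  have hfix : w.length - 1 + 1 = w.length := by omega
  rw [hfix, pow_succ]
  ring

end S18

set_option maxHeartbeats 1000000 in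
/-- the series identity from the proof of Theorem 2.4 — if the
generalized Thue–Morse sequence is an expansion of `1` in base `β`, then
`∑ τ_i β^{-pi}` equals the stated rational expression in `β`. -/
theorem stmt18 (N : ℕ) (hN : 2 ≤ N) (β : ℝ) (hβ : 1 < β) (halg : IsAlgebraic ℚ β)
    (w : List ℕ) (hadm : Admissible N w)
    (hsum : ∑' ℓ : ℕ, (gtm N w ℓ : ℝ) / β ^ (ℓ + 1) = 1) :
    ∑' i : ℕ, (tm (i + 1) : ℝ) / β ^ (w.length * (i + 1)) =
      (1 - (β ^ w.length)⁻¹ -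
          ∑ q ∈ Finset.range w.length, (w.getD q 0 : ℝ) / β ^ (q + 1)) /
        ((1 - (β ^ w.length)⁻¹) *
          (1 - (β ^ w.length)⁻¹ +
            ∑ q ∈ Finset.range w.length,
              ((N : ℝ) - 1 - 2 * (w.getD q 0 : ℝ)) / β ^ (q + 1))) := by
  obtain ⟨hw, hmem, hlast, -⟩ := hadm
  classical
  have hp : 0 < w.length := List.length_pos_iff.mpr hw
  have hβ0 : (0:ℝ) < β := lt_trans one_pos hβ
  have hβne : β ≠ 0 := ne_of_gt hβ0
  set x : ℝ := (β ^ w.length)⁻¹ with hxdef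
  have hx0 : 0 < x := inv_pos.mpr (pow_pos hβ0 _)
  have hx1 : x < 1 := inv_lt_one_of_one_lt₀ (one_lt_pow₀ hβ (by omega))
  set T : ℝ := ∑ q ∈ Finset.range w.length, (w.getD q 0 : ℝ) / β ^ (q + 1) with hTdef
  set D : ℝ := ∑ q ∈ Finset.range w.length,
      ((N : ℝ) - 1 - 2 * (w.getD q 0 : ℝ)) / β ^ (q + 1) with hDdef
  have hGterm : ∀ i : ℕ, (tm (i + 1) : ℝ) / β ^ (w.length * (i + 1)) =
      (tm (i + 1) : ℝ) * x ^ (i + 1) := by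
    intro i
    rw [hxdef, inv_pow, ← pow_mul, div_eq_mul_inv]
  rw [tsum_congr hGterm]
  set G : ℝ := ∑' i : ℕ, (tm (i + 1) : ℝ) * x ^ (i + 1) with hGdef
  -- summability facts
  have hgeo : Summable (fun i : ℕ => x ^ i) :=
    summable_geometric_of_lt_one hx0.le hx1
  have hsum_tm : Summable (fun i : ℕ => (tm i : ℝ) * x ^ i) := by
    apply Summable.of_nonneg_of_le (fun i => by positivity) (fun i => ?_) hgeo
    have h1 : (tm i : ℝ) ≤ 1 := by exact_mod_cast S18.tm_le_one i
    calc (tm i : ℝ) * x ^ i ≤ 1 * x ^ i :=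
          mul_le_mul_of_nonneg_right h1 (pow_nonneg hx0.le i)
      _ = x ^ i := one_mul _
  have hsum_tm1 : Summable (fun i : ℕ => (tm (i + 1) : ℝ) * x ^ (i + 1)) :=
    (summable_nat_add_iff 1).mpr hsum_tm
  have hSval : ∑' i : ℕ, (tm i : ℝ) * x ^ i = G := by
    rw [Summable.tsum_eq_zero_add hsum_tm, hGdef]
    simp [S18.tm_zero]
  -- summability of the expansion series
  have hb1 : Summable (fun ℓ : ℕ => (β⁻¹) ^ (ℓ + 1)) := by
    have := (summable_geometric_of_lt_one (by positivity : (0:ℝ) ≤ β⁻¹)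
      (inv_lt_one_of_one_lt₀ hβ)).comp_injective (add_left_injective 1)
    exact this
  have hfsummable : Summable (fun ℓ : ℕ => (gtm N w ℓ : ℝ) / β ^ (ℓ + 1)) := by
    apply Summable.of_nonneg_of_le (fun ℓ => by positivity) (fun ℓ => ?_)
      (hb1.mul_left (N : ℝ))
    rw [div_eq_mul_inv, ← inv_pow]
    apply mul_le_mul_of_nonneg_right ?_ (by positivity)
    have h1 := S18.gtm_le N w hw hmem hlast ℓ
    have h2 : gtm N w ℓ ≤ N := by omega
    exact_mod_cast h2
  -- reindex over blocks
  haveI : NeZero w.length := ⟨hp.ne'⟩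
  have h2 : ∑' q : ℕ × Fin w.length,
      (gtm N w (q.1 * w.length + (q.2 : ℕ)) : ℝ) /
        β ^ ((q.1 * w.length + (q.2 : ℕ)) + 1) = 1 := by
    rw [← hsum]
    exact Equiv.tsum_eq (Nat.divModEquiv w.length).symm
      (fun ℓ : ℕ => (gtm N w ℓ : ℝ) / β ^ (ℓ + 1))
  have hF : Summable (fun q : ℕ × Fin w.length =>
      (gtm N w (q.1 * w.length + (q.2 : ℕ)) : ℝ) /
        β ^ ((q.1 * w.length + (q.2 : ℕ)) + 1)) :=
    ((Nat.divModEquiv w.length).symm.summable_iff).mpr hfsummable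
  have h3 : ∑' (i : ℕ) (r : Fin w.length),
      (gtm N w (i * w.length + (r : ℕ)) : ℝ) /
        β ^ ((i * w.length + (r : ℕ)) + 1) = 1 := by
    rw [← Summable.tsum_prod' hF (fun b => Summable.of_finite)]
    exact h2
  have h4 : ∀ i : ℕ, ∑' (r : Fin w.length),
      (gtm N w (i * w.length + (r : ℕ)) : ℝ) /
        β ^ ((i * w.length + (r : ℕ)) + 1)
      = x ^ i * (T + (tm i : ℝ) * D) + ((tm (i + 1) : ℝ) - (tm i : ℝ)) * x ^ (i + 1) := by
    intro i
    rw [tsum_fintype, hxdef, hTdef, hDdef]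
    rw [Fin.sum_univ_eq_sum_range (fun r =>
      (gtm N w (i * w.length + r) : ℝ) / β ^ ((i * w.length + r) + 1)) w.length]
    exact S18.hinner_lemma N hN β hβ w hw hmem hlast i
  have hkey : ∑' i : ℕ, (x ^ i * (T + (tm i : ℝ) * D) +
      ((tm (i + 1) : ℝ) - (tm i : ℝ)) * x ^ (i + 1)) = 1 := by
    rw [tsum_congr h4] at h3
    exact h3
  have hcomb : ∀ i : ℕ, x ^ i * (T + (tm i : ℝ) * D) +
      ((tm (i + 1) : ℝ) - (tm i : ℝ)) * x ^ (i + 1)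
      = (T * x ^ i + D * ((tm i : ℝ) * x ^ i)) +
        ((tm (i + 1) : ℝ) * x ^ (i + 1) - x * ((tm i : ℝ) * x ^ i)) := by
    intro i
    rw [pow_succ]
    ring
  rw [tsum_congr hcomb] at hkey
  have sA : Summable (fun i : ℕ => T * x ^ i) := hgeo.mul_left T
  have sB : Summable (fun i : ℕ => D * ((tm i : ℝ) * x ^ i)) := hsum_tm.mul_left D
  have sD : Summable (fun i : ℕ => x * ((tm i : ℝ) * x ^ i)) := hsum_tm.mul_left x
  rw [Summable.tsum_add (sA.add sB) (hsum_tm1.sub sD), Summable.tsum_add sA sB,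
    Summable.tsum_sub hsum_tm1 sD, tsum_mul_left, tsum_mul_left, tsum_mul_left,
    tsum_geometric_of_lt_one hx0.le hx1, hSval, ← hGdef] at hkey
  -- hkey : T * (1 - x)⁻¹ + D * G + (G - x * G) = 1
  have hdig : ∀ q : ℕ, w.getD q 0 ≤ N - 1 :=
    S18.getD_le_of_forall w (N - 1) (fun c hc => Nat.le_sub_one_of_lt (hmem c hc))
  have hdigR : ∀ q : ℕ, (w.getD q 0 : ℝ) ≤ (N : ℝ) - 1 := by
    intro q
    have h1 := hdig q
    have h2 : (w.getD q 0 : ℝ) ≤ ((N - 1 : ℕ) : ℝ) := by exact_mod_cast h1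
    rw [Nat.cast_sub (by omega)] at h2
    simpa using h2
  have hTD : 0 < T + D := by
    rw [hTdef, hDdef, ← Finset.sum_add_distrib]
    apply Finset.sum_pos'
    · intro q hq
      have h1 := hdigR q
      rw [← add_div]
      apply div_nonneg ?_ (by positivity)
      linarith
    · refine ⟨w.length - 1, Finset.mem_range.mpr (by omega), ?_⟩
      rw [← add_div]
      apply div_pos ?_ (by positivity)
      have hlt : w.getD (w.length - 1) 0 < N - 1 := by
        rw [← S18.getLast!_eq_getD w hw]
        exact hlast
      have h3 : ((w.getD (w.length - 1) 0 + 1 : ℕ) : ℝ) ≤ ((N - 1 : ℕ) : ℝ) := by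
        exact_mod_cast (by omega : w.getD (w.length - 1) 0 + 1 ≤ N - 1)
      rw [Nat.cast_sub (by omega)] at h3
      push_cast at h3
      linarith
  have hu : (0:ℝ) < 1 - x := by linarith
  have hune : (1:ℝ) - x ≠ 0 := ne_of_gt hu
  have hIu : (1 - x) * (1 - x)⁻¹ = 1 := mul_inv_cancel₀ hune
  have hE : 1 - x + D ≠ 0 := by
    intro h0
    have hD' : D = x - 1 := by linarith
    have hz : D * G + (G - x * G) = 0 := by
      rw [hD']
      ring
    have h1 : T * (1 - x)⁻¹ = 1 := by linarith [hkey]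
    have h2 : T = 1 - x := by
      field_simp at h1
      linarith
    linarith
  rw [eq_div_iff (mul_ne_zero hune hE)]
  linear_combination (1 - x) * hkey - T * hIu
end

section
/- Let N ≥ 2 and let t_1⋯t_p be an admissible block with generalized Thue–Morse sequence (θ_i). If 1 ≤ i ≤ p and the i-th cyclic rotation satisfies (N−1−t_i)⋯(N−1−t_p)(N−1−t_1)⋯(N−1−t_{i-1}) = t_1⋯t_p^+ as blocks, then a contradiction follows; i.e., for every 1 ≤ i ≤ p, the reflection of the i-th cyclic rotation of t_1⋯t_p is strictly less than t_1⋯t_p^+ in lexicographic order. -/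
lemma getLast!_eq_getLast' (l : List ℕ) (h : l ≠ []) : l.getLast! = l.getLast h := by
  cases l with
  | nil => simp at h
  | cons x t => simp [List.getLast!, List.getLast?_eq_getLast h]

lemma reflB_reflB (N : ℕ) (w : List ℕ) (hw : ∀ c ∈ w, c < N) : reflB N (reflB N w) = w := by
  unfold reflB
  rw [List.map_map]
  conv_rhs => rw [← List.map_id w]
  apply List.map_congr_left
  intro c hc
  have := hw c hc
  simp only [Function.comp_apply, id]
  omega

lemma reflB_antitone (N : ℕ) : ∀ (a b : List ℕ), a.length = b.length → (∀ c ∈ b, c < N) →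
    List.Lex (· < ·) a b → List.Lex (· < ·) (reflB N b) (reflB N a) := by
  intro a b hlen hb h
  induction h with
  | nil => simp at hlen
  | @cons x l1 l2 h ih =>
    exact List.Lex.cons (ih (by simpa using hlen) fun c hc => hb c (List.mem_cons_of_mem _ hc))
  | @rel x l1 y l2 hxy =>
    apply List.Lex.rel
    have hyN : y < N := hb y List.mem_cons_self
    show N - 1 - y < N - 1 - x
    omega

lemma self_lt_plusB (w : List ℕ) (hw : w ≠ []) : w < plusB w := by
  show List.Lex (· < ·) w (plusB w)
  unfold plusB
  rw [getLast!_eq_getLast' w hw]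
  conv_lhs => rw [← List.dropLast_append_getLast hw]
  exact List.Lex.append_left _ (List.Lex.rel (Nat.lt_succ_self _)) _

/-- strictness claim from the proof of Proposition 4.2 — for an
admissible block, the reflection of each cyclic rotation of `t_1⋯t_p` is
strictly smaller than `t_1⋯t_p^+`. -/
theorem stmt19 (N : ℕ) (hN : 2 ≤ N) (w : List ℕ) (hadm : Admissible N w) :
    ∀ i < w.length, reflB N (rotB w i) < plusB w := by
  intro i hi
  obtain ⟨hne, hdig, hlast, hineq⟩ := hadm
  have hrotdig : ∀ c ∈ rotB w i, c < N := by
    intro c hc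
    unfold rotB at hc
    rcases List.mem_append.mp hc with h | h
    · exact hdig c (List.mem_of_mem_drop h)
    · exact hdig c (List.mem_of_mem_take h)
  have hle : reflB N w ≤ rotB w i := (hineq i hi).1
  have hwlt : w < plusB w := self_lt_plusB w hne
  rcases lt_or_eq_of_le hle with hlt | heq
  · have hlen : (reflB N w).length = (rotB w i).length := by
      simp [reflB, rotB]
      omega
    have := reflB_antitone N (reflB N w) (rotB w i) hlen hrotdig hlt
    rw [reflB_reflB N w hdig] at this
    exact lt_trans this hwlt
  · rw [← heq, reflB_reflB N w hdig]
    exact hwlt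
end
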